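/- arXiv:2101.01424 — 2 statements merged into one kernel-verified Lean document; each statement's English description precedes it below -/
import Mathlib

section
/- Let d ≥ 1 and let S be a nonempty subset of ℤ^d such that (i) any two elements of S are comparable in the componentwise partial order, and (ii) for every x ∈ S, both x + (1,…,1) and x − (1,…,1) belong to S. Then S, equipped with the order induced from the componentwise order on ℤ^d, is order-isomorphic to (ℤ, ≤). -/
/-- Lemma `lem:totally`: a nonempty, totally ordered subset of `ℤ^d` (componentwise order)
that is stable under adding and subtracting the all-ones vector is order-isomorphic to `ℤ`. -/
theorem stmt_0 (d : ℕ) (hd : 1 ≤ d) (S : Set (Fin d → ℤ)) (hne : S.Nonempty)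
    (htot : ∀ x ∈ S, ∀ y ∈ S, x ≤ y ∨ y ≤ x)
    (hclosed : ∀ x ∈ S, (x + fun _ => (1 : ℤ)) ∈ S ∧ (x - fun _ => (1 : ℤ)) ∈ S) :
    Nonempty (S ≃o ℤ) := by
  letI : LinearOrder S :=
    { (inferInstance : PartialOrder S) with
      le_total := fun x y => htot x.1 x.2 y.1 y.2
      toDecidableLE := Classical.decRel _ }
  haveI : LocallyFiniteOrder S := by
    refine LocallyFiniteOrder.ofFiniteIcc fun a b => ?_
    have h : (Set.Icc a b : Set S) ⊆ Subtype.val ⁻¹' Set.Icc a.1 b.1 := by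
      rintro x ⟨h1, h2⟩; exact ⟨h1, h2⟩
    exact Set.Finite.subset (Set.Finite.preimage Subtype.val_injective.injOn
      (Set.finite_Icc a.1 b.1)) h
  haveI : Nonempty S := hne.to_subtype
  have i0 : Fin d := ⟨0, hd⟩
  haveI : NoMaxOrder S := by
    constructor
    intro x
    refine ⟨⟨x.1 + fun _ => 1, (hclosed x.1 x.2).1⟩, ?_⟩
    refine lt_of_le_of_ne (fun i => by simp) ?_
    intro h
    have := congrArg (fun z => z.1 i0) h
    simp at this
  haveI : NoMinOrder S := by
    constructor
    intro x
    refine ⟨⟨x.1 - fun _ => 1, (hclosed x.1 x.2).2⟩, ?_⟩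
    refine lt_of_le_of_ne (fun i => by simp [sub_le_iff_le_add]) ?_
    intro h
    have := congrArg (fun z => z.1 i0) h
    simp [sub_eq_iff_eq_add] at this
  letI sc : SuccOrder S := LinearLocallyFiniteOrder.succOrder S
  letI pr : PredOrder S := LinearLocallyFiniteOrder.predOrder S
  haveI arch : IsSuccArchimedean S := inferInstance
  exact ⟨@orderIsoIntOfLinearSuccPredArch S _ sc pr arch _ _ ‹Nonempty S›⟩
end

section
/- Let G be a group and (U_n)_{n∈ℕ} an increasing sequence of finite subgroups of G (U_n ⊆ U_{n+1} for all n) such that G = ⋃_{n∈ℕ} U_n. Then for every integer j ≥ 1, the group cohomology H^j(G, ℚ), with G acting trivially on ℚ, vanishes. -/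
namespace Stmt14Aux

open Finset CategoryTheory

variable {G : Type} [Group G]

/-- The inhomogeneous coboundary with trivial `ℚ`-coefficients, as a raw formula. -/
noncomputable def D (n : ℕ) (f : (Fin n → G) → ℚ) : (Fin (n + 1) → G) → ℚ :=
  fun g => f (fun i => g i.succ) +
    ∑ j : Fin (n + 1), (-1 : ℚ) ^ ((j : ℕ) + 1) • f (Fin.contractNth j (· * ·) g)

lemma D_eq (n : ℕ) (f : (Fin n → G) → ℚ) :
    D n f = inhomogeneousCochains.d (Rep.trivial ℚ G ℚ) n f := by
  funext g
  simp [D, inhomogeneousCochains.d_hom_apply]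

lemma D_D (n : ℕ) (f : (Fin n → G) → ℚ) (g : Fin (n + 2) → G) :
    D (n + 1) (D n f) g = 0 := by
  have h := (groupCohomology.inhomogeneousCochains (Rep.trivial ℚ G ℚ)).d_comp_d n (n + 1) (n + 2)
  rw [groupCohomology.inhomogeneousCochains.d_def, groupCohomology.inhomogeneousCochains.d_def] at h
  have h2 := ConcreteCategory.congr_hom h f
  have h3 : D (n + 1) (D n f) = 0 := by
    rw [D_eq, D_eq]
    exact h2
  rw [h3]
  rfl

lemma D_sub (n : ℕ) (a b : (Fin n → G) → ℚ) :
    D n (a - b) = D n a - D n b := by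
  funext g
  simp only [D, Pi.sub_apply, smul_sub, Finset.sum_sub_distrib]
  ring

lemma D_smul (n : ℕ) (c : ℚ) (a : (Fin n → G) → ℚ) :
    D n (c • a) = c • D n a := by
  funext g
  simp only [D, Pi.smul_apply, smul_eq_mul, mul_add, Finset.mul_sum]
  congr 1
  exact Finset.sum_congr rfl fun j _ => by ring

lemma mem_contractNth {H : Subgroup G} {n : ℕ} {g : Fin (n + 1) → G} (hg : ∀ i, g i ∈ H)
    (j : Fin (n + 1)) (k : Fin n) : Fin.contractNth j (· * ·) g k ∈ H := by
  unfold Fin.contractNth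
  split_ifs
  · exact hg _
  · exact mul_mem (hg _) (hg _)
  · exact hg _

lemma D_congr {H : Subgroup G} {n : ℕ} {φ φ' : (Fin n → G) → ℚ}
    (h : ∀ t : Fin n → G, (∀ i, t i ∈ H) → φ t = φ' t)
    {g : Fin (n + 1) → G} (hg : ∀ i, g i ∈ H) : D n φ g = D n φ' g := by
  unfold D
  congr 1
  · exact h _ fun i => hg _
  · exact Finset.sum_congr rfl fun j _ => by rw [h _ fun k => mem_contractNth hg j k]

lemma mem_snoc {H : Subgroup G} {n : ℕ} {g : Fin n → G} (hg : ∀ i, g i ∈ H) {x : G}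
    (hx : x ∈ H) : ∀ i, (Fin.snoc g x : Fin (n + 1) → G) i ∈ H := by
  intro i
  refine Fin.lastCases ?_ (fun i => ?_) i
  · simpa using hx
  · simpa using hg i

lemma tail_snoc {n : ℕ} (g : Fin (n + 1) → G) (x : G) :
    (fun i : Fin (n + 1) => (Fin.snoc g x : Fin (n + 2) → G) i.succ) =
      (Fin.snoc (fun i : Fin n => g i.succ) x : Fin (n + 1) → G) := by
  funext k
  refine Fin.lastCases ?_ (fun k => ?_) k
  · rw [Fin.succ_last, Fin.snoc_last, Fin.snoc_last]
  · rw [Fin.succ_castSucc, Fin.snoc_castSucc, Fin.snoc_castSucc]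

lemma contract_last_snoc {n : ℕ} (g : Fin (n + 1) → G) (x : G) :
    Fin.contractNth (Fin.last (n + 1)) (· * ·) (Fin.snoc g x) = g := by
  funext k
  rw [Fin.contractNth_apply_of_lt _ _ _ _ (by simpa using k.isLt), Fin.snoc_castSucc]

lemma contract_castSucc_snoc_of_lt {n : ℕ} (g : Fin (n + 1) → G) (x : G) {i : Fin (n + 1)}
    (hi : (i : ℕ) < n) :
    Fin.contractNth (Fin.castSucc i) (· * ·) (Fin.snoc g x) =
      Fin.snoc (Fin.contractNth i (· * ·) g) x := by
  funext k
  refine Fin.lastCases ?_ (fun k => ?_) k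
  · rw [Fin.contractNth_apply_of_gt _ _ _ _ (by simpa using hi), Fin.snoc_last,
      Fin.succ_last, Fin.snoc_last]
  · rcases lt_trichotomy (k : ℕ) (i : ℕ) with h | h | h
    · rw [Fin.contractNth_apply_of_lt _ _ _ _ (by simpa using h), Fin.snoc_castSucc,
        Fin.snoc_castSucc, Fin.contractNth_apply_of_lt _ _ _ _ h]
    · rw [Fin.contractNth_apply_of_eq _ _ _ _ (by simpa using h), Fin.snoc_castSucc,
        Fin.succ_castSucc, Fin.snoc_castSucc, Fin.snoc_castSucc,
        Fin.contractNth_apply_of_eq _ _ _ _ h]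
    · rw [Fin.contractNth_apply_of_gt _ _ _ _ (by simpa using h), Fin.succ_castSucc,
        Fin.snoc_castSucc, Fin.snoc_castSucc, Fin.contractNth_apply_of_gt _ _ _ _ h]

lemma contract_castSucc_snoc_last {n : ℕ} (g : Fin (n + 1) → G) (x : G) :
    Fin.contractNth (Fin.castSucc (Fin.last n)) (· * ·) (Fin.snoc g x) =
      Fin.snoc (Fin.contractNth (Fin.last n) (· * ·) g) (g (Fin.last n) * x) := by
  funext k
  refine Fin.lastCases ?_ (fun k => ?_) k
  · rw [Fin.contractNth_apply_of_eq _ _ _ _ (by simp), Fin.snoc_last, Fin.snoc_castSucc,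
      Fin.succ_last, Fin.snoc_last]
  · rw [Fin.contractNth_apply_of_lt _ _ _ _ (by simpa using k.isLt), Fin.snoc_castSucc,
      Fin.snoc_castSucc, Fin.contractNth_apply_of_lt _ _ _ _ (by simpa using k.isLt)]

/-- Averaging: on a finite subgroup, every positive-degree cocycle (with rational
coefficients) has a primitive. -/
lemma avg (H : Subgroup G) [Finite H] (n : ℕ) (f : (Fin (n + 1) → G) → ℚ)
    (hf : ∀ g : Fin (n + 2) → G, (∀ i, g i ∈ H) → D (n + 1) f g = 0) :
    ∃ φ : (Fin n → G) → ℚ, ∀ g : Fin (n + 1) → G, (∀ i, g i ∈ H) → D n φ g = f g := by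
  have : Fintype H := Fintype.ofFinite _
  set N : ℚ := (Fintype.card H : ℚ) with hN
  have hN0 : N ≠ 0 := by
    simp [hN, Fintype.card_ne_zero]
  set S : (Fin n → G) → ℚ := fun t => ∑ h : H, f (Fin.snoc t (h : G)) with hS
  have key : ∀ g : Fin (n + 1) → G, (∀ i, g i ∈ H) →
      D n S g = (-1 : ℚ) ^ (n + 1) * (N * f g) := by
    intro g hg
    have hsum : ∑ h : H, D (n + 1) f (Fin.snoc g (h : G)) = 0 :=
      Finset.sum_eq_zero fun h _ => hf _ (mem_snoc hg h.2)
    unfold D at hsum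
    rw [Finset.sum_add_distrib] at hsum
    have h1 : (∑ h : H, f fun i => (Fin.snoc g (h : G) : Fin (n + 2) → G) i.succ) =
        S fun i : Fin n => g i.succ := by
      refine Finset.sum_congr rfl fun h _ => ?_
      rw [tail_snoc]
    have h2 : (∑ h : H, ∑ j : Fin (n + 2),
        (-1 : ℚ) ^ ((j : ℕ) + 1) • f (Fin.contractNth j (· * ·) (Fin.snoc g (h : G)))) =
        (∑ i : Fin (n + 1), (-1 : ℚ) ^ ((i : ℕ) + 1) • S (Fin.contractNth i (· * ·) g)) +
          (-1 : ℚ) ^ (n + 2) * (N * f g) := by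
      rw [Finset.sum_comm]
      rw [Fin.sum_univ_castSucc]
      congr 1
      · refine Finset.sum_congr rfl fun i _ => ?_
        rw [← Finset.smul_sum]
        congr 1
        rcases lt_or_eq_of_le (Nat.lt_succ_iff.mp i.isLt) with hi | hi
        · refine Finset.sum_congr rfl fun h _ => ?_
          rw [contract_castSucc_snoc_of_lt g (h : G) hi]
        · have hilast : i = Fin.last n := Fin.ext hi
          subst hilast
          have : ∀ h : H, f (Fin.contractNth (Fin.castSucc (Fin.last n)) (· * ·)
              (Fin.snoc g (h : G))) =
              f (Fin.snoc (Fin.contractNth (Fin.last n) (· * ·) g) (g (Fin.last n) * (h : G))) :=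
            fun h => by rw [contract_castSucc_snoc_last]
          rw [Finset.sum_congr rfl fun h _ => this h]
          exact Fintype.sum_equiv (Equiv.mulLeft (⟨g (Fin.last n), hg _⟩ : H))
            (fun h => f (Fin.snoc (Fin.contractNth (Fin.last n) (· * ·) g)
              (g (Fin.last n) * (h : G))))
            (fun h => f (Fin.snoc (Fin.contractNth (Fin.last n) (· * ·) g) (h : G)))
            (fun h => rfl)
      · have : ∀ h : H, (-1 : ℚ) ^ (((Fin.last (n + 1) : Fin (n + 2)) : ℕ) + 1) •
            f (Fin.contractNth (Fin.last (n + 1)) (· * ·) (Fin.snoc g (h : G))) =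
            (-1 : ℚ) ^ (n + 2) * f g := by
          intro h
          rw [contract_last_snoc]
          simp [smul_eq_mul]
        rw [Finset.sum_congr rfl fun h _ => this h]
        rw [Finset.sum_const]
        simp [hN, mul_comm, mul_assoc, mul_left_comm]
    rw [h1, h2] at hsum
    unfold D
    have : S (fun i : Fin n => g i.succ) +
        ((∑ i : Fin (n + 1), (-1 : ℚ) ^ ((i : ℕ) + 1) • S (Fin.contractNth i (· * ·) g)) +
          (-1 : ℚ) ^ (n + 2) * (N * f g)) = 0 := hsum
    have hpow : (-1 : ℚ) ^ (n + 2) = -((-1 : ℚ) ^ (n + 1)) := by ring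
    rw [hpow] at this
    linarith [this]
  refine ⟨((-1 : ℚ) ^ (n + 1) / N) • S, fun g hg => ?_⟩
  rw [D_smul]
  have := key g hg
  rw [Pi.smul_apply, this, smul_eq_mul]
  have hpow2 : (-1 : ℚ) ^ (n + 1) * (-1 : ℚ) ^ (n + 1) = 1 := by
    rw [← pow_add]
    exact Even.neg_one_pow ⟨n + 1, by ring⟩
  have hNN : N / N = 1 := div_self hN0
  calc ((-1 : ℚ) ^ (n + 1) / N) * ((-1 : ℚ) ^ (n + 1) * (N * f g))
      = ((-1 : ℚ) ^ (n + 1) * (-1 : ℚ) ^ (n + 1)) * ((N / N) * f g) := by ring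
    _ = f g := by rw [hpow2, hNN]; ring

lemma D_zero_apply (f : (Fin 0 → G) → ℚ) (g : Fin 1 → G) : D 0 f g = 0 := by
  unfold D
  rw [Fin.sum_univ_one]
  have h1 : (fun i : Fin 0 => g i.succ) = Fin.contractNth 0 (· * ·) g := by
    funext i
    exact i.elim0
  rw [h1]
  simp

lemma exists_primitive (U : ℕ → Subgroup G) (hmono : ∀ n, U n ≤ U (n + 1))
    (hfin : ∀ n, Finite (U n)) (hunion : ∀ g : G, ∃ n, g ∈ U n)
    (m : ℕ) (f : (Fin (m + 1) → G) → ℚ) (hf : D (m + 1) f = 0) :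
    ∃ φ : (Fin m → G) → ℚ, D m φ = f := by
  have hmono' : ∀ {a b : ℕ}, a ≤ b → U a ≤ U b := fun {a b} hab =>
    monotone_nat_of_le_succ hmono hab
  have htup : ∀ {r : ℕ} (t : Fin r → G), ∃ n, ∀ i, t i ∈ U n := by
    intro r t
    choose nf hnf using fun i => hunion (t i)
    exact ⟨Finset.univ.sup nf, fun i => hmono' (Finset.le_sup (Finset.mem_univ i)) (hnf i)⟩
  have hcocycle : ∀ (n : ℕ) (g : Fin (m + 2) → G), (∀ i, g i ∈ U n) → D (m + 1) f g = 0 :=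
    fun n g _ => by rw [hf]; rfl
  set P : ℕ → ((Fin m → G) → ℚ) → Prop :=
    fun n φ => ∀ g : Fin (m + 1) → G, (∀ i, g i ∈ U n) → D m φ g = f g with hP
  have base : ∃ φ0, P 0 φ0 := by
    haveI := hfin 0
    exact avg (U 0) m f (hcocycle 0)
  have step : ∀ (n : ℕ) (φ : (Fin m → G) → ℚ), P n φ →
      ∃ φ', P (n + 1) φ' ∧ ∀ t : Fin m → G, (∀ i, t i ∈ U n) → φ' t = φ t := by
    intro n φ hφ
    haveI := hfin (n + 1)
    haveI := hfin n
    obtain ⟨ψ, hψ⟩ := avg (U (n + 1)) m f (hcocycle (n + 1))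
    cases m with
    | zero =>
      refine ⟨φ, fun g hg => ?_, fun t _ => rfl⟩
      rw [D_zero_apply, ← hψ g hg, D_zero_apply]
    | succ m' =>
      obtain ⟨θ, hθ⟩ := avg (U n) m' (ψ - φ) (fun g hg => by
        rw [D_sub, Pi.sub_apply, hψ g (fun i => hmono n (hg i)), hφ g hg, sub_self])
      classical
      set θ' : (Fin m' → G) → ℚ := fun t => if ∀ i, t i ∈ U n then θ t else 0 with hθ'
      refine ⟨ψ - D m' θ', fun g hg => ?_, fun t ht => ?_⟩
      · have hsub : D (m' + 1) (ψ - D m' θ') g = D (m' + 1) ψ g - D (m' + 1) (D m' θ') g := by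
          rw [D_sub, Pi.sub_apply]
        rw [hsub, D_D, sub_zero, hψ g hg]
      · have hDθ : D m' θ' t = D m' θ t :=
          D_congr (H := U n) (fun s hs => by rw [hθ']; exact if_pos hs) ht
        have := hθ t ht
        rw [Pi.sub_apply] at this
        rw [Pi.sub_apply, hDθ, this]
        ring
  let T : ℕ → Type := fun n => { φ : (Fin m → G) → ℚ // P n φ }
  let base' : T 0 := ⟨Classical.choose base, Classical.choose_spec base⟩
  let stepF : ∀ n, T n → T (n + 1) := fun n x =>
    ⟨Classical.choose (step n x.1 x.2), (Classical.choose_spec (step n x.1 x.2)).1⟩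
  let seq : ∀ n, T n := fun n => Nat.rec base' stepF n
  have hcompat : ∀ (n : ℕ) (t : Fin m → G), (∀ i, t i ∈ U n) →
      (seq (n + 1)).1 t = (seq n).1 t := fun n t ht =>
    (Classical.choose_spec (step n (seq n).1 (seq n).2)).2 t ht
  have hcompat' : ∀ (a b : ℕ), a ≤ b → ∀ t : Fin m → G, (∀ i, t i ∈ U a) →
      (seq b).1 t = (seq a).1 t := by
    intro a b hab
    induction b, hab using Nat.le_induction with
    | base => intro t _; rfl
    | succ b hb ih =>
      intro t ht
      rw [hcompat b t fun i => hmono' hb (ht i)]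
      exact ih t ht
  refine ⟨fun t => (seq (Classical.choose (htup t))).1 t, ?_⟩
  have hΦ : ∀ (k : ℕ) (t : Fin m → G), (∀ i, t i ∈ U k) →
      (seq (Classical.choose (htup t))).1 t = (seq k).1 t := by
    intro k t ht
    have h1 := Classical.choose_spec (htup t)
    set N := Classical.choose (htup t) with hNdef
    rw [← hcompat' N (max N k) (le_max_left _ _) t h1,
      hcompat' k (max N k) (le_max_right _ _) t ht]
  funext g
  obtain ⟨k, hk⟩ := htup g
  have hD : D m (fun t => (seq (Classical.choose (htup t))).1 t) g = D m (seq k).1 g :=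
    D_congr (H := U k) (fun t ht => hΦ k t ht) hk
  rw [hD, (seq k).2 g hk]

end Stmt14Aux

/-- The key claim in the proof of the lemma inside Proposition `7_prop3`: a group that is
the union of an increasing sequence of finite subgroups has vanishing rational group
cohomology in all positive degrees. -/
theorem stmt_14 (G : Type) [Group G] (U : ℕ → Subgroup G)
    (hmono : ∀ n : ℕ, U n ≤ U (n + 1))
    (hfin : ∀ n : ℕ, Finite (U n))
    (hunion : ∀ g : G, ∃ n : ℕ, g ∈ U n)
    (j : ℕ) (hj : 1 ≤ j) :
    Subsingleton (groupCohomology (Rep.trivial ℚ G ℚ) j) := by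
  obtain ⟨m, rfl⟩ : ∃ m, j = m + 1 := ⟨j - 1, (Nat.succ_pred_eq_of_pos hj).symm⟩
  have h1 : (groupCohomology.inhomogeneousCochains (Rep.trivial ℚ G ℚ)).ExactAt (m + 1) := by
    rw [HomologicalComplex.exactAt_iff' _ m (m + 1) (m + 2)
      ((ComplexShape.up ℕ).prev_eq' (by simp)) ((ComplexShape.up ℕ).next_eq' (by simp))]
    rw [CategoryTheory.ShortComplex.moduleCat_exact_iff]
    intro f hf
    have hf' : Stmt14Aux.D (m + 1) f = 0 := (Stmt14Aux.D_eq (m + 1) f).trans (by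
      rw [← groupCohomology.inhomogeneousCochains.d_def]
      exact hf)
    obtain ⟨φ, hφ⟩ := Stmt14Aux.exists_primitive U hmono hfin hunion m f hf'
    refine ⟨φ, ?_⟩
    show (groupCohomology.inhomogeneousCochains (Rep.trivial ℚ G ℚ)).d m (m + 1) φ = f
    rw [groupCohomology.inhomogeneousCochains.d_def]
    exact (Stmt14Aux.D_eq m φ).symm.trans hφ
  have h3 : CategoryTheory.Limits.IsZero (groupCohomology (Rep.trivial ℚ G ℚ) (m + 1)) :=
    (HomologicalComplex.exactAt_iff_isZero_homology _ _).1 h1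
  have hid : CategoryTheory.CategoryStruct.id (groupCohomology (Rep.trivial ℚ G ℚ) (m + 1)) =
      0 := h3.eq_of_src _ _
  constructor
  intro a b
  have key : ∀ x : groupCohomology (Rep.trivial ℚ G ℚ) (m + 1), x = 0 := by
    intro x
    calc x = (CategoryTheory.CategoryStruct.id
          (groupCohomology (Rep.trivial ℚ G ℚ) (m + 1))) x := rfl
    _ = (0 : groupCohomology (Rep.trivial ℚ G ℚ) (m + 1) ⟶
          groupCohomology (Rep.trivial ℚ G ℚ) (m + 1)) x := by rw [hid]
    _ = 0 := rfl
  rw [key a, key b]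
end
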